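/- Let S ⊆ ℤ and r, K ∈ ℕ, and suppose ⋃_{t=1}^r (S - t) is thick in ℤ (contains arbitrarily long intervals). Then the set B := {(A, D) ∈ ℤ² : A + iD ∈ ⋃_{t=1}^r (S - t) for all i = 0, 1, ..., K} is thick in ℤ². -/

import Mathlib

/-- A subset of an abelian group is thick if it contains a translate of every finite set. -/
def Thick {G : Type*} [AddCommGroup G] (T : Set G) : Prop :=
  ∀ F : Finset G, ∃ g : G, ∀ f ∈ F, g + f ∈ T

/-- A subset is piecewise syndetic if a finite union of its translates is thick. -/
def PWSyn {G : Type*} [AddCommGroup G] (S : Set G) : Prop :=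
  ∃ F : Finset G, Thick {x : G | ∃ t ∈ F, x + t ∈ S}

/-- If the union of S - t, t = 1..r, is thick in ℤ then the set of pairs (A, D) whose whole
progression A, A+D, ..., A+KD lies in that union is thick in ℤ². -/
theorem progressionPairs_thick (S : Set ℤ) (r K : ℕ)
    (hthick : ∀ L : ℕ, ∃ a : ℤ, ∀ i : ℤ, a ≤ i → i < a + L →
      ∃ t : ℤ, 1 ≤ t ∧ t ≤ (r : ℤ) ∧ i + t ∈ S) :
    Thick {p : ℤ × ℤ | ∀ i : ℕ, i ≤ K →
      ∃ t : ℤ, 1 ≤ t ∧ t ≤ (r : ℤ) ∧ (p.1 + (i : ℤ) * p.2) + t ∈ S} := by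
  intro F
  set M : ℕ := F.sup (fun p => (|p.1| + K * |p.2|).toNat) with hM
  obtain ⟨a, ha⟩ := hthick (2 * M + 1)
  refine ⟨((a + M, 0) : ℤ × ℤ), ?_⟩
  intro f hf
  intro i hi
  have hle : |f.1| + (K : ℤ) * |f.2| ≤ (M : ℤ) := by
    have h1 := Finset.le_sup (f := fun p : ℤ × ℤ => (|p.1| + K * |p.2|).toNat) hf
    have h0 : (0:ℤ) ≤ |f.1| + (K : ℤ) * |f.2| := by positivity
    have h2 : (|f.1| + (K:ℤ) * |f.2|).toNat ≤ M := h1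
    have h3 := Int.toNat_of_nonneg h0
    omega
  have habs : |f.1 + (i : ℤ) * f.2| ≤ (M : ℤ) := by
    calc |f.1 + (i : ℤ) * f.2| ≤ |f.1| + |(i : ℤ) * f.2| := abs_add_le _ _
    _ = |f.1| + (i : ℤ) * |f.2| := by rw [abs_mul, abs_of_nonneg (by positivity : (0:ℤ) ≤ (i:ℤ))]
    _ ≤ |f.1| + (K : ℤ) * |f.2| := by
        have : (i : ℤ) ≤ (K : ℤ) := by exact_mod_cast hi
        nlinarith [abs_nonneg f.2]
    _ ≤ (M : ℤ) := hle
  have h1 : a ≤ ((a + M, 0) + f).1 + (i : ℤ) * ((a + M, 0) + f).2 := by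
    simp only [Prod.fst_add, Prod.snd_add]
    have := abs_le.mp habs
    push_cast
    linarith [this.1]
  have h2 : ((a + M, 0) + f).1 + (i : ℤ) * ((a + M, 0) + f).2 < a + (2 * M + 1 : ℕ) := by
    simp only [Prod.fst_add, Prod.snd_add]
    have := abs_le.mp habs
    push_cast
    linarith [this.2]
  obtain ⟨t, ht1, ht2, ht3⟩ := ha _ h1 h2
  exact ⟨t, ht1, ht2, ht3⟩
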